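/- Let Λ₁ be a row-finite k₁-graph with no sources and Λ₂ a row-finite k₂-graph with no sources. Then the cartesian product (k₁+k₂)-graph Λ₁ × Λ₂ is aperiodic if and only if both Λ₁ and Λ₂ are aperiodic. -/

import Mathlib

set_option autoImplicit false

open scoped Classical

/-- A `k`-graph: a countable small category together with a degree functor
`d : Λ → ℕ^k` satisfying the unique factorization property.  Paths (morphisms)
form a single type; vertices (objects) are identified with the paths of
degree `0`. -/
structure KGraph (k : ℕ) where
  /-- the type of paths (morphisms) of the `k`-graph -/
  Path : Type
  countable : Countable Path
  nonempty : Nonempty Path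
  /-- the range (codomain) vertex of a path -/
  r : Path → Path
  /-- the source (domain) vertex of a path -/
  s : Path → Path
  /-- composition: `comp lam mu` is the path `λμ`, meaningful when `s lam = r mu` -/
  comp : Path → Path → Path
  /-- the degree functor -/
  d : Path → Fin k → ℕ
  d_r : ∀ lam, d (r lam) = 0
  d_s : ∀ lam, d (s lam) = 0
  r_r : ∀ lam, r (r lam) = r lam
  s_r : ∀ lam, s (r lam) = r lam
  r_s : ∀ lam, r (s lam) = s lam
  s_s : ∀ lam, s (s lam) = s lam
  id_comp : ∀ lam, comp (r lam) lam = lam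
  comp_id : ∀ lam, comp lam (s lam) = lam
  r_comp : ∀ lam mu, s lam = r mu → r (comp lam mu) = r lam
  s_comp : ∀ lam mu, s lam = r mu → s (comp lam mu) = s mu
  d_comp : ∀ lam mu, s lam = r mu → d (comp lam mu) = d lam + d mu
  comp_assoc : ∀ lam mu nu, s lam = r mu → s mu = r nu →
    comp (comp lam mu) nu = comp lam (comp mu nu)
  /-- the unique factorization property -/
  factor : ∀ lam (m n : Fin k → ℕ), d lam = m + n →
    ∃! p : Path × Path, s p.1 = r p.2 ∧ comp p.1 p.2 = lam ∧ d p.1 = m ∧ d p.2 = n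

namespace KGraph

variable {k : ℕ}

/-- `v` is a vertex, i.e. an element of `Λ⁰`. -/
def IsVertex (Λ : KGraph k) (v : Λ.Path) : Prop := Λ.d v = 0

/-- `v ≤ w`, i.e. `vΛw ≠ ∅`. -/
def Conn (Λ : KGraph k) (v w : Λ.Path) : Prop := ∃ lam, Λ.r lam = v ∧ Λ.s lam = w

/-- the canonical generator `e i` of `ℕ^k`. -/
def eVec (k : ℕ) (i : Fin k) : Fin k → ℕ := Pi.single i 1

/-- `Λ` is row-finite: `vΛⁿ` is finite for every vertex `v` and `n ∈ ℕ^k`. -/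
def RowFinite (Λ : KGraph k) : Prop :=
  ∀ v, Λ.IsVertex v → ∀ n : Fin k → ℕ, {lam | Λ.r lam = v ∧ Λ.d lam = n}.Finite

/-- `Λ` has no sources: `vΛ^{e i} ≠ ∅` for every vertex `v` and `i`. -/
def NoSources (Λ : KGraph k) : Prop :=
  ∀ v, Λ.IsVertex v → ∀ i : Fin k, ∃ lam, Λ.r lam = v ∧ Λ.d lam = eVec k i

/-- the middle factor `λ(m,n)`: the unique `σ` such that `λ = μστ` with
`d μ = m`, `d σ = n - m`, `d τ = d λ - n` (junk value if no factorization exists). -/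
noncomputable def seg (Λ : KGraph k) (lam : Λ.Path) (m n : Fin k → ℕ) : Λ.Path :=
  if h : ∃ sig, ∃ mu tau, Λ.s mu = Λ.r sig ∧ Λ.s sig = Λ.r tau ∧
      Λ.comp (Λ.comp mu sig) tau = lam ∧ Λ.d mu = m ∧ Λ.d sig = n - m ∧
      Λ.d tau = Λ.d lam - n
  then h.choose else lam

/-- `Λ` has no local periodicity at the vertex `v`. -/
def NoLocalPeriodicity (Λ : KGraph k) (v : Λ.Path) : Prop :=
  ∀ m n : Fin k → ℕ, m ≠ n →
    ∃ lam, Λ.r lam = v ∧ m ⊔ n ≤ Λ.d lam ∧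
      Λ.seg lam m (m + Λ.d lam - (m ⊔ n)) ≠ Λ.seg lam n (n + Λ.d lam - (m ⊔ n))

/-- `Λ` is aperiodic: no vertex has local periodicity. -/
def Aperiodic (Λ : KGraph k) : Prop := ∀ v, Λ.IsVertex v → Λ.NoLocalPeriodicity v

/-- a hereditary set of vertices -/
def Hereditary (Λ : KGraph k) (H : Set Λ.Path) : Prop :=
  ∀ v ∈ H, ∀ w, Λ.Conn v w → w ∈ H

/-- a saturated set of vertices -/
def Saturated (Λ : KGraph k) (H : Set Λ.Path) : Prop :=
  ∀ v, Λ.IsVertex v → (∃ mu, Λ.r mu = v) →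
    (∃ i : Fin k, ∀ lam, Λ.r lam = v → Λ.d lam = eVec k i → Λ.s lam ∈ H) → v ∈ H

/-- the saturation of a set of vertices: the smallest saturated set containing it -/
def saturation (Λ : KGraph k) (H : Set Λ.Path) : Set Λ.Path :=
  ⋂₀ {K : Set Λ.Path | H ⊆ K ∧ Λ.Saturated K}

/-- no local periodicity at the vertex `v` of the quotient graph `Γ(Λ \ H)`
(whose paths are the paths of `Λ` with source outside `H`). -/
def QuotNoLocalPeriodicity (Λ : KGraph k) (H : Set Λ.Path) (v : Λ.Path) : Prop :=
  ∀ m n : Fin k → ℕ, m ≠ n →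
    ∃ lam, Λ.r lam = v ∧ Λ.s lam ∉ H ∧ m ⊔ n ≤ Λ.d lam ∧
      Λ.seg lam m (m + Λ.d lam - (m ⊔ n)) ≠ Λ.seg lam n (n + Λ.d lam - (m ⊔ n))

/-- `Λ` is strongly aperiodic: `Γ(Λ \ H)` is aperiodic for every saturated
hereditary proper subset `H ⊊ Λ⁰`. -/
def StronglyAperiodic (Λ : KGraph k) : Prop :=
  ∀ H : Set Λ.Path, (∀ v ∈ H, Λ.IsVertex v) → Λ.Hereditary H → Λ.Saturated H →
    H ≠ {v | Λ.IsVertex v} →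
    ∀ v, Λ.IsVertex v → v ∉ H → Λ.QuotNoLocalPeriodicity H v

/-- a maximal tail -/
def MaximalTail (Λ : KGraph k) (γ : Set Λ.Path) : Prop :=
  γ.Nonempty ∧ (∀ v ∈ γ, Λ.IsVertex v) ∧
  (∀ v₁ ∈ γ, ∀ v₂ ∈ γ, ∃ w ∈ γ, Λ.Conn v₁ w ∧ Λ.Conn v₂ w) ∧
  (∀ v ∈ γ, ∀ i : Fin k, ∃ f, Λ.r f = v ∧ Λ.d f = eVec k i ∧ Λ.s f ∈ γ) ∧
  (∀ v, Λ.IsVertex v → ∀ w ∈ γ, Λ.Conn v w → v ∈ γ)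

end KGraph

namespace KGraph

section ProductGraph

variable {k₁ k₂ : ℕ}

private lemma fin_append_zero :
    Fin.append (0 : Fin k₁ → ℕ) (0 : Fin k₂ → ℕ) = 0 := by
  funext i
  refine Fin.addCases (fun j => ?_) (fun j => ?_) i <;>
    simp [Fin.append_left, Fin.append_right]

private lemma fin_append_add (f f' : Fin k₁ → ℕ) (g g' : Fin k₂ → ℕ) :
    Fin.append (f + f') (g + g') = Fin.append f g + Fin.append f' g' := by
  funext i
  refine Fin.addCases (fun j => ?_) (fun j => ?_) i <;>
    simp [Fin.append_left, Fin.append_right]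

private lemma fin_append_restrict (m : Fin (k₁ + k₂) → ℕ) :
    Fin.append (fun i => m (Fin.castAdd k₂ i)) (fun j => m (Fin.natAdd k₁ j)) = m := by
  funext i
  refine Fin.addCases (fun j => ?_) (fun j => ?_) i <;>
    simp [Fin.append_left, Fin.append_right]

/-- The cartesian product of a `k₁`-graph and a `k₂`-graph, a `(k₁+k₂)`-graph. -/
noncomputable def prod (Λ₁ : KGraph k₁) (Λ₂ : KGraph k₂) : KGraph (k₁ + k₂) where
  Path := Λ₁.Path × Λ₂.Path
  countable := by have := Λ₁.countable; have := Λ₂.countable; exact inferInstance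
  nonempty := by have := Λ₁.nonempty; have := Λ₂.nonempty; exact inferInstance
  r := fun p => (Λ₁.r p.1, Λ₂.r p.2)
  s := fun p => (Λ₁.s p.1, Λ₂.s p.2)
  comp := fun p q => (Λ₁.comp p.1 q.1, Λ₂.comp p.2 q.2)
  d := fun p => Fin.append (Λ₁.d p.1) (Λ₂.d p.2)
  d_r := fun p => by dsimp only; rw [Λ₁.d_r, Λ₂.d_r]; exact fin_append_zero
  d_s := fun p => by dsimp only; rw [Λ₁.d_s, Λ₂.d_s]; exact fin_append_zero
  r_r := fun p => by dsimp only; rw [Λ₁.r_r, Λ₂.r_r]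
  s_r := fun p => by dsimp only; rw [Λ₁.s_r, Λ₂.s_r]
  r_s := fun p => by dsimp only; rw [Λ₁.r_s, Λ₂.r_s]
  s_s := fun p => by dsimp only; rw [Λ₁.s_s, Λ₂.s_s]
  id_comp := fun p => by dsimp only; rw [Λ₁.id_comp, Λ₂.id_comp]
  comp_id := fun p => by dsimp only; rw [Λ₁.comp_id, Λ₂.comp_id]
  r_comp := fun p q h => by
    dsimp only
    have h1 : Λ₁.s p.1 = Λ₁.r q.1 := congrArg Prod.fst h
    have h2 : Λ₂.s p.2 = Λ₂.r q.2 := congrArg Prod.snd h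
    rw [Λ₁.r_comp _ _ h1, Λ₂.r_comp _ _ h2]
  s_comp := fun p q h => by
    dsimp only
    have h1 : Λ₁.s p.1 = Λ₁.r q.1 := congrArg Prod.fst h
    have h2 : Λ₂.s p.2 = Λ₂.r q.2 := congrArg Prod.snd h
    rw [Λ₁.s_comp _ _ h1, Λ₂.s_comp _ _ h2]
  d_comp := fun p q h => by
    dsimp only
    have h1 : Λ₁.s p.1 = Λ₁.r q.1 := congrArg Prod.fst h
    have h2 : Λ₂.s p.2 = Λ₂.r q.2 := congrArg Prod.snd h
    rw [Λ₁.d_comp _ _ h1, Λ₂.d_comp _ _ h2, fin_append_add]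
  comp_assoc := fun p q t h h' => by
    dsimp only
    have h1 : Λ₁.s p.1 = Λ₁.r q.1 := congrArg Prod.fst h
    have h2 : Λ₂.s p.2 = Λ₂.r q.2 := congrArg Prod.snd h
    have h1' : Λ₁.s q.1 = Λ₁.r t.1 := congrArg Prod.fst h'
    have h2' : Λ₂.s q.2 = Λ₂.r t.2 := congrArg Prod.snd h'
    rw [Λ₁.comp_assoc _ _ _ h1 h1', Λ₂.comp_assoc _ _ _ h2 h2']
  factor := fun p m n hmn => by
    have h1 : Λ₁.d p.1 =
        (fun i => m (Fin.castAdd k₂ i)) + (fun i => n (Fin.castAdd k₂ i)) := by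
      funext i
      have := congrFun hmn (Fin.castAdd k₂ i)
      simpa [Fin.append_left] using this
    have h2 : Λ₂.d p.2 =
        (fun j => m (Fin.natAdd k₁ j)) + (fun j => n (Fin.natAdd k₁ j)) := by
      funext j
      have := congrFun hmn (Fin.natAdd k₁ j)
      simpa [Fin.append_right] using this
    obtain ⟨q₁, ⟨hq₁s, hq₁c, hq₁m, hq₁n⟩, hq₁u⟩ := Λ₁.factor p.1 _ _ h1
    obtain ⟨q₂, ⟨hq₂s, hq₂c, hq₂m, hq₂n⟩, hq₂u⟩ := Λ₂.factor p.2 _ _ h2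
    refine ⟨((q₁.1, q₂.1), (q₁.2, q₂.2)), ⟨?_, ?_, ?_, ?_⟩, ?_⟩
    · show (Λ₁.s q₁.1, Λ₂.s q₂.1) = (Λ₁.r q₁.2, Λ₂.r q₂.2)
      rw [hq₁s, hq₂s]
    · show (Λ₁.comp q₁.1 q₁.2, Λ₂.comp q₂.1 q₂.2) = p
      rw [hq₁c, hq₂c]
    · show Fin.append (Λ₁.d q₁.1) (Λ₂.d q₂.1) = m
      rw [hq₁m, hq₂m]; exact fin_append_restrict m
    · show Fin.append (Λ₁.d q₁.2) (Λ₂.d q₂.2) = n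
      rw [hq₁n, hq₂n]; exact fin_append_restrict n
    · rintro ⟨⟨a, b⟩, ⟨c, e⟩⟩ ⟨hs, hc, hm, hn⟩
      have hs1 : Λ₁.s a = Λ₁.r c := congrArg Prod.fst hs
      have hs2 : Λ₂.s b = Λ₂.r e := congrArg Prod.snd hs
      have hc1 : Λ₁.comp a c = p.1 := congrArg Prod.fst hc
      have hc2 : Λ₂.comp b e = p.2 := congrArg Prod.snd hc
      have hm1 : Λ₁.d a = fun i => m (Fin.castAdd k₂ i) := by
        funext i
        have := congrFun hm (Fin.castAdd k₂ i)
        simpa [Fin.append_left] using this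
      have hm2 : Λ₂.d b = fun j => m (Fin.natAdd k₁ j) := by
        funext j
        have := congrFun hm (Fin.natAdd k₁ j)
        simpa [Fin.append_right] using this
      have hn1 : Λ₁.d c = fun i => n (Fin.castAdd k₂ i) := by
        funext i
        have := congrFun hn (Fin.castAdd k₂ i)
        simpa [Fin.append_left] using this
      have hn2 : Λ₂.d e = fun j => n (Fin.natAdd k₁ j) := by
        funext j
        have := congrFun hn (Fin.natAdd k₁ j)
        simpa [Fin.append_right] using this
      have e1 : (a, c) = q₁ := hq₁u (a, c) ⟨hs1, hc1, hm1, hn1⟩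
      have e2 : (b, e) = q₂ := hq₂u (b, e) ⟨hs2, hc2, hm2, hn2⟩
      have ea : a = q₁.1 := congrArg Prod.fst e1
      have ec : c = q₁.2 := congrArg Prod.snd e1
      have eb : b = q₂.1 := congrArg Prod.fst e2
      have ee : e = q₂.2 := congrArg Prod.snd e2
      subst ea; subst ec; subst eb; subst ee
      rfl

end ProductGraph

end KGraph

namespace KGraph

section Aux

variable {k : ℕ}

private lemma sup_apply' (m n : Fin k → ℕ) (i : Fin k) :
    (m ⊔ n) i = max (m i) (n i) := rfl

/-- Any factorization `λ = μστ` with the right degrees identifies `σ` as the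
segment `λ(m,n)`. -/
private lemma seg_eq (Λ : KGraph k) {lam mu sig tau : Λ.Path} {m n : Fin k → ℕ}
    (h1 : Λ.s mu = Λ.r sig) (h2 : Λ.s sig = Λ.r tau)
    (h3 : Λ.comp (Λ.comp mu sig) tau = lam)
    (hm : Λ.d mu = m) (hs : Λ.d sig = n - m) (ht : Λ.d tau = Λ.d lam - n) :
    Λ.seg lam m n = sig := by
  have hex : ∃ sig, ∃ mu tau, Λ.s mu = Λ.r sig ∧ Λ.s sig = Λ.r tau ∧
      Λ.comp (Λ.comp mu sig) tau = lam ∧ Λ.d mu = m ∧ Λ.d sig = n - m ∧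
      Λ.d tau = Λ.d lam - n := ⟨sig, mu, tau, h1, h2, h3, hm, hs, ht⟩
  rw [seg, dif_pos hex]
  obtain ⟨mu', tau', h1', h2', h3', hm', hs', ht'⟩ := hex.choose_spec
  have hsc : Λ.s (Λ.comp mu sig) = Λ.r tau := by rw [Λ.s_comp _ _ h1]; exact h2
  have hsc' : Λ.s (Λ.comp mu' hex.choose) = Λ.r tau' := by
    rw [Λ.s_comp _ _ h1']; exact h2'
  have hdeg : Λ.d lam = (m + (n - m)) + (Λ.d lam - n) := by
    conv_lhs => rw [← h3, Λ.d_comp _ _ hsc, Λ.d_comp _ _ h1]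
    rw [hm, hs, ht]
  obtain ⟨q, hq, hqu⟩ := Λ.factor lam (m + (n - m)) (Λ.d lam - n) hdeg
  have e1 := hqu (Λ.comp mu sig, tau)
    ⟨hsc, h3, by rw [Λ.d_comp _ _ h1, hm, hs], ht⟩
  have e2 := hqu (Λ.comp mu' hex.choose, tau')
    ⟨hsc', h3', by rw [Λ.d_comp _ _ h1', hm', hs'], ht'⟩
  have ec : Λ.comp mu' hex.choose = Λ.comp mu sig :=
    congrArg Prod.fst (e2.trans e1.symm)
  have hdeg2 : Λ.d (Λ.comp mu sig) = m + (n - m) := by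
    rw [Λ.d_comp _ _ h1, hm, hs]
  obtain ⟨q2, hq2, hq2u⟩ := Λ.factor (Λ.comp mu sig) m (n - m) hdeg2
  have f1 := hq2u (mu, sig) ⟨h1, rfl, hm, hs⟩
  have f2 := hq2u (mu', hex.choose) ⟨h1', ec, hm', hs'⟩
  exact congrArg Prod.snd (f2.trans f1.symm)

/-- For `m ≤ n ≤ d λ` the segment `λ(m,n)` really does come from a
factorization. -/
private lemma seg_spec (Λ : KGraph k) (lam : Λ.Path) (m n : Fin k → ℕ)
    (hmn : m ≤ n) (hn : n ≤ Λ.d lam) :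
    ∃ mu tau, Λ.s mu = Λ.r (Λ.seg lam m n) ∧ Λ.s (Λ.seg lam m n) = Λ.r tau ∧
      Λ.comp (Λ.comp mu (Λ.seg lam m n)) tau = lam ∧ Λ.d mu = m ∧
      Λ.d (Λ.seg lam m n) = n - m ∧ Λ.d tau = Λ.d lam - n := by
  have hd1 : Λ.d lam = m + (Λ.d lam - m) := by
    funext i; have h1 : m i ≤ n i := hmn i; have h2 : n i ≤ Λ.d lam i := hn i
    simp only [Pi.add_apply, Pi.sub_apply]; omega
  obtain ⟨⟨mu, rest⟩, ⟨hsr, hcomp, hdm, hdr⟩, -⟩ :=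
    Λ.factor lam m (Λ.d lam - m) hd1
  have hd2 : Λ.d rest = (n - m) + (Λ.d lam - n) := by
    rw [hdr]; funext i; have h1 : m i ≤ n i := hmn i; have h2 : n i ≤ Λ.d lam i := hn i
    simp only [Pi.add_apply, Pi.sub_apply]; omega
  obtain ⟨⟨sig, tau⟩, ⟨hsr2, hcomp2, hds, hdt⟩, -⟩ :=
    Λ.factor rest (n - m) (Λ.d lam - n) hd2
  have h1 : Λ.s mu = Λ.r sig := by
    rw [hsr, ← hcomp2, Λ.r_comp _ _ hsr2]
  have h3 : Λ.comp (Λ.comp mu sig) tau = lam := by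
    rw [Λ.comp_assoc _ _ _ h1 hsr2, hcomp2, hcomp]
  have hseg := Λ.seg_eq h1 hsr2 h3 hdm hds hdt
  rw [hseg]
  exact ⟨mu, tau, h1, hsr2, h3, hdm, hds, hdt⟩

private lemma vertex_r (Λ : KGraph k) {v : Λ.Path} (hv : Λ.IsVertex v) :
    Λ.r v = v := by
  have hd : Λ.d v = 0 + 0 := by rw [hv]; simp
  obtain ⟨q, hq, hqu⟩ := Λ.factor v 0 0 hd
  have e1 := hqu (Λ.r v, v) ⟨Λ.s_r v, Λ.id_comp v, Λ.d_r v, hv⟩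
  have e2 := hqu (v, Λ.s v) ⟨(Λ.r_s v).symm, Λ.comp_id v, hv, Λ.d_s v⟩
  exact congrArg Prod.fst (e1.trans e2.symm)

/-- With no sources, every vertex receives a path of every degree. -/
private lemma exists_deg (Λ : KGraph k) (hns : Λ.NoSources) :
    ∀ N : ℕ, ∀ n : Fin k → ℕ, (∑ i, n i) = N → ∀ v, Λ.IsVertex v →
      ∃ lam, Λ.r lam = v ∧ Λ.d lam = n := by
  intro N
  induction N with
  | zero =>
    intro n hn v hv
    have hn0 : n = 0 := by
      funext i
      by_contra h
      have hpos : 0 < ∑ j, n j :=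
        Finset.sum_pos' (fun _ _ => Nat.zero_le _)
          ⟨i, Finset.mem_univ i, Nat.pos_of_ne_zero fun h0 => h (by simp [h0])⟩
      omega
    exact ⟨v, Λ.vertex_r hv, by rw [hn0]; exact hv⟩
  | succ N ih =>
    intro n hn v hv
    have hexi : ∃ i, n i ≠ 0 := by
      by_contra h; push_neg at h
      simp [h] at hn
    obtain ⟨i, hi⟩ := hexi
    obtain ⟨f, hrf, hdf⟩ := hns v hv i
    have hsf : Λ.IsVertex (Λ.s f) := Λ.d_s f
    have hsplit : n = eVec k i + (n - eVec k i) := by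
      funext j
      simp only [Pi.add_apply, Pi.sub_apply, eVec, Pi.single_apply]
      by_cases hji : j = i <;> simp [hji] <;> omega
    have hsum : ∑ j, (n - eVec k i) j = N := by
      have h1 : ∑ j, n j = (∑ j, (eVec k i) j) + ∑ j, (n - eVec k i) j := by
        conv_lhs => rw [hsplit]
        simp only [Pi.add_apply]
        exact Finset.sum_add_distrib
      have h2 : ∑ j, (eVec k i) j = 1 := by
        simp [eVec]
      omega
    obtain ⟨lam', hr', hd'⟩ := ih (n - eVec k i) hsum (Λ.s f) hsf
    refine ⟨Λ.comp f lam', ?_, ?_⟩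
    · rw [Λ.r_comp _ _ hr'.symm, hrf]
    · rw [Λ.d_comp _ _ hr'.symm, hdf, hd', ← hsplit]

end Aux

section ProdAux

variable {k₁ k₂ : ℕ} (Λ₁ : KGraph k₁) (Λ₂ : KGraph k₂)

private lemma prod_d (p : Λ₁.Path × Λ₂.Path) :
    (Λ₁.prod Λ₂).d p = Fin.append (Λ₁.d p.1) (Λ₂.d p.2) := rfl

private lemma prod_r (p : Λ₁.Path × Λ₂.Path) :
    (Λ₁.prod Λ₂).r p = (Λ₁.r p.1, Λ₂.r p.2) := rfl

private lemma prod_s (p : Λ₁.Path × Λ₂.Path) :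
    (Λ₁.prod Λ₂).s p = (Λ₁.s p.1, Λ₂.s p.2) := rfl

private lemma prod_comp (p q : Λ₁.Path × Λ₂.Path) :
    (Λ₁.prod Λ₂).comp p q = (Λ₁.comp p.1 q.1, Λ₂.comp p.2 q.2) := rfl

private lemma fin_append_sub (f f' : Fin k₁ → ℕ) (g g' : Fin k₂ → ℕ) :
    Fin.append (f - f') (g - g') = Fin.append f g - Fin.append f' g' := by
  funext i
  refine Fin.addCases (fun j => ?_) (fun j => ?_) i <;>
    simp [Fin.append_left, Fin.append_right]

/-- Segments in the product graph are computed componentwise. -/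
private lemma prod_seg (p : Λ₁.Path × Λ₂.Path) (m n : Fin (k₁ + k₂) → ℕ)
    (hmn : m ≤ n) (hn : n ≤ (Λ₁.prod Λ₂).d p) :
    (Λ₁.prod Λ₂).seg p m n =
      (Λ₁.seg p.1 (fun i => m (Fin.castAdd k₂ i)) (fun i => n (Fin.castAdd k₂ i)),
       Λ₂.seg p.2 (fun j => m (Fin.natAdd k₁ j)) (fun j => n (Fin.natAdd k₁ j))) := by
  have hmn1 : (fun i => m (Fin.castAdd k₂ i)) ≤ fun i => n (Fin.castAdd k₂ i) :=
    fun i => hmn _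
  have hmn2 : (fun j => m (Fin.natAdd k₁ j)) ≤ fun j => n (Fin.natAdd k₁ j) :=
    fun j => hmn _
  have hn1 : (fun i => n (Fin.castAdd k₂ i)) ≤ Λ₁.d p.1 := by
    intro i
    have := hn (Fin.castAdd k₂ i)
    rwa [prod_d, Fin.append_left] at this
  have hn2 : (fun j => n (Fin.natAdd k₁ j)) ≤ Λ₂.d p.2 := by
    intro j
    have := hn (Fin.natAdd k₁ j)
    rwa [prod_d, Fin.append_right] at this
  obtain ⟨μ₁, τ₁, a1, a2, a3, a4, a5, a6⟩ := Λ₁.seg_spec p.1 _ _ hmn1 hn1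
  obtain ⟨μ₂, τ₂, b1, b2, b3, b4, b5, b6⟩ := Λ₂.seg_spec p.2 _ _ hmn2 hn2
  refine (Λ₁.prod Λ₂).seg_eq (mu := (μ₁, μ₂)) (tau := (τ₁, τ₂)) ?_ ?_ ?_ ?_ ?_ ?_
  · show (Λ₁.s μ₁, Λ₂.s μ₂) = (Λ₁.r _, Λ₂.r _)
    rw [a1, b1]
  · show (Λ₁.s _, Λ₂.s _) = (Λ₁.r τ₁, Λ₂.r τ₂)
    rw [a2, b2]
  · show (Λ₁.comp (Λ₁.comp μ₁ _) τ₁, Λ₂.comp (Λ₂.comp μ₂ _) τ₂) = p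
    rw [a3, b3]
  · show Fin.append (Λ₁.d μ₁) (Λ₂.d μ₂) = m
    rw [a4, b4]; exact fin_append_restrict m
  · show Fin.append (Λ₁.d _) (Λ₂.d _) = n - m
    rw [a5, b5, fin_append_sub, fin_append_restrict, fin_append_restrict]
  · show Fin.append (Λ₁.d τ₁) (Λ₂.d τ₂) = (Λ₁.prod Λ₂).d p - n
    rw [a6, b6, fin_append_sub, fin_append_restrict, prod_d]

private lemma mid_le {k : ℕ} {m n d : Fin k → ℕ} (h : m ⊔ n ≤ d) :
    m ≤ m + d - (m ⊔ n) ∧ m + d - (m ⊔ n) ≤ d ∧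
    n ≤ n + d - (m ⊔ n) ∧ n + d - (m ⊔ n) ≤ d := by
  refine ⟨fun i => ?_, fun i => ?_, fun i => ?_, fun i => ?_⟩ <;>
    · have h1 : max (m i) (n i) ≤ d i := h i
      simp only [Pi.add_apply, Pi.sub_apply, sup_apply']
      omega

end ProdAux

end KGraph

/-- The cartesian product `Λ₁ × Λ₂` is aperiodic iff both `Λ₁` and `Λ₂`
are aperiodic. -/
theorem stmt8 {k₁ k₂ : ℕ} (Λ₁ : KGraph k₁) (Λ₂ : KGraph k₂)
    (h₁f : Λ₁.RowFinite) (h₁s : Λ₁.NoSources)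
    (h₂f : Λ₂.RowFinite) (h₂s : Λ₂.NoSources) :
    (Λ₁.prod Λ₂).Aperiodic ↔ (Λ₁.Aperiodic ∧ Λ₂.Aperiodic) := by
  open KGraph in
  constructor
  · -- product aperiodic → both aperiodic
    intro hap
    constructor
    · intro v₁ hv₁ m₁ n₁ hne
      obtain ⟨p₂⟩ := Λ₂.nonempty
      have hwv : Λ₂.IsVertex (Λ₂.r p₂) := Λ₂.d_r p₂
      have hv : (Λ₁.prod Λ₂).IsVertex (v₁, Λ₂.r p₂) := by
        show Fin.append (Λ₁.d v₁) (Λ₂.d (Λ₂.r p₂)) = 0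
        rw [show Λ₁.d v₁ = 0 from hv₁, show Λ₂.d (Λ₂.r p₂) = 0 from hwv]
        exact KGraph.fin_append_zero
      have hmn' : Fin.append m₁ (0 : Fin k₂ → ℕ) ≠ Fin.append n₁ 0 := by
        intro h
        apply hne
        funext i
        have := congrFun h (Fin.castAdd k₂ i)
        simpa [Fin.append_left] using this
      obtain ⟨lam, hr, hle, hne'⟩ :=
        hap (v₁, Λ₂.r p₂) hv (Fin.append m₁ 0) (Fin.append n₁ 0) hmn'
      set m : Fin (k₁ + k₂) → ℕ := Fin.append m₁ 0 with hm
      set n : Fin (k₁ + k₂) → ℕ := Fin.append n₁ 0 with hn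
      refine ⟨lam.1, congrArg Prod.fst hr, ?_, ?_⟩
      · intro i
        have h := hle (Fin.castAdd k₂ i)
        simp only [hm, hn, sup_apply', KGraph.prod_d Λ₁ Λ₂ lam, Fin.append_left] at h
        simpa [sup_apply'] using h
      · obtain ⟨hmA, hAd, hnB, hBd⟩ := KGraph.mid_le hle
        rw [KGraph.prod_seg Λ₁ Λ₂ lam m _ hmA hAd,
            KGraph.prod_seg Λ₁ Λ₂ lam n _ hnB hBd] at hne'
        intro heq
        apply hne'
        have em : (fun i => m (Fin.castAdd k₂ i)) = m₁ :=
          funext fun i => Fin.append_left m₁ 0 i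
        have en : (fun i => n (Fin.castAdd k₂ i)) = n₁ :=
          funext fun i => Fin.append_left n₁ 0 i
        have eAm : (fun i => (m + (Λ₁.prod Λ₂).d lam - (m ⊔ n)) (Fin.castAdd k₂ i))
            = m₁ + Λ₁.d lam.1 - (m₁ ⊔ n₁) := by
          funext i
          simp [hm, hn, Pi.add_apply, Pi.sub_apply, sup_apply', KGraph.prod_d Λ₁ Λ₂ lam,
            Fin.append_left]
        have eAn : (fun i => (n + (Λ₁.prod Λ₂).d lam - (m ⊔ n)) (Fin.castAdd k₂ i))
            = n₁ + Λ₁.d lam.1 - (m₁ ⊔ n₁) := by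
          funext i
          simp [hm, hn, Pi.add_apply, Pi.sub_apply, sup_apply', KGraph.prod_d Λ₁ Λ₂ lam,
            Fin.append_left]
        have e2m : (fun j => m (Fin.natAdd k₁ j)) = (0 : Fin k₂ → ℕ) :=
          funext fun j => Fin.append_right m₁ 0 j
        have e2n : (fun j => n (Fin.natAdd k₁ j)) = (0 : Fin k₂ → ℕ) :=
          funext fun j => Fin.append_right n₁ 0 j
        have eBm : (fun j => (m + (Λ₁.prod Λ₂).d lam - (m ⊔ n)) (Fin.natAdd k₁ j))
            = Λ₂.d lam.2 := by
          funext j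
          simp [hm, hn, Pi.add_apply, Pi.sub_apply, sup_apply', KGraph.prod_d Λ₁ Λ₂ lam,
            Fin.append_right]
        have eBn : (fun j => (n + (Λ₁.prod Λ₂).d lam - (m ⊔ n)) (Fin.natAdd k₁ j))
            = Λ₂.d lam.2 := by
          funext j
          simp [hm, hn, Pi.add_apply, Pi.sub_apply, sup_apply', KGraph.prod_d Λ₁ Λ₂ lam,
            Fin.append_right]
        rw [em, en, eAm, eAn, e2m, e2n, eBm, eBn, heq]
    · intro v₂ hv₂ m₂ n₂ hne
      obtain ⟨p₁⟩ := Λ₁.nonempty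
      have hwv : Λ₁.IsVertex (Λ₁.r p₁) := Λ₁.d_r p₁
      have hv : (Λ₁.prod Λ₂).IsVertex (Λ₁.r p₁, v₂) := by
        show Fin.append (Λ₁.d (Λ₁.r p₁)) (Λ₂.d v₂) = 0
        rw [show Λ₁.d (Λ₁.r p₁) = 0 from hwv, show Λ₂.d v₂ = 0 from hv₂]
        exact KGraph.fin_append_zero
      have hmn' : Fin.append (0 : Fin k₁ → ℕ) m₂ ≠ Fin.append 0 n₂ := by
        intro h
        apply hne
        funext j
        have := congrFun h (Fin.natAdd k₁ j)
        simpa [Fin.append_right] using this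
      obtain ⟨lam, hr, hle, hne'⟩ :=
        hap (Λ₁.r p₁, v₂) hv (Fin.append 0 m₂) (Fin.append 0 n₂) hmn'
      set m : Fin (k₁ + k₂) → ℕ := Fin.append 0 m₂ with hm
      set n : Fin (k₁ + k₂) → ℕ := Fin.append 0 n₂ with hn
      refine ⟨lam.2, congrArg Prod.snd hr, ?_, ?_⟩
      · intro j
        have h := hle (Fin.natAdd k₁ j)
        simp only [hm, hn, sup_apply', KGraph.prod_d Λ₁ Λ₂ lam, Fin.append_right] at h
        simpa [sup_apply'] using h
      · obtain ⟨hmA, hAd, hnB, hBd⟩ := KGraph.mid_le hle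
        rw [KGraph.prod_seg Λ₁ Λ₂ lam m _ hmA hAd,
            KGraph.prod_seg Λ₁ Λ₂ lam n _ hnB hBd] at hne'
        intro heq
        apply hne'
        have em : (fun j => m (Fin.natAdd k₁ j)) = m₂ :=
          funext fun j => Fin.append_right (0 : Fin k₁ → ℕ) m₂ j
        have en : (fun j => n (Fin.natAdd k₁ j)) = n₂ :=
          funext fun j => Fin.append_right (0 : Fin k₁ → ℕ) n₂ j
        have eAm : (fun j => (m + (Λ₁.prod Λ₂).d lam - (m ⊔ n)) (Fin.natAdd k₁ j))
            = m₂ + Λ₂.d lam.2 - (m₂ ⊔ n₂) := by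
          funext j
          simp [hm, hn, Pi.add_apply, Pi.sub_apply, sup_apply', KGraph.prod_d Λ₁ Λ₂ lam,
            Fin.append_right]
        have eAn : (fun j => (n + (Λ₁.prod Λ₂).d lam - (m ⊔ n)) (Fin.natAdd k₁ j))
            = n₂ + Λ₂.d lam.2 - (m₂ ⊔ n₂) := by
          funext j
          simp [hm, hn, Pi.add_apply, Pi.sub_apply, sup_apply', KGraph.prod_d Λ₁ Λ₂ lam,
            Fin.append_right]
        have e1m : (fun i => m (Fin.castAdd k₂ i)) = (0 : Fin k₁ → ℕ) :=
          funext fun i => Fin.append_left (0 : Fin k₁ → ℕ) m₂ i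
        have e1n : (fun i => n (Fin.castAdd k₂ i)) = (0 : Fin k₁ → ℕ) :=
          funext fun i => Fin.append_left (0 : Fin k₁ → ℕ) n₂ i
        have eBm : (fun i => (m + (Λ₁.prod Λ₂).d lam - (m ⊔ n)) (Fin.castAdd k₂ i))
            = Λ₁.d lam.1 := by
          funext i
          simp [hm, hn, Pi.add_apply, Pi.sub_apply, sup_apply', KGraph.prod_d Λ₁ Λ₂ lam,
            Fin.append_left]
        have eBn : (fun i => (n + (Λ₁.prod Λ₂).d lam - (m ⊔ n)) (Fin.castAdd k₂ i))
            = Λ₁.d lam.1 := by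
          funext i
          simp [hm, hn, Pi.add_apply, Pi.sub_apply, sup_apply', KGraph.prod_d Λ₁ Λ₂ lam,
            Fin.append_left]
        rw [em, en, eAm, eAn, e1m, e1n, eBm, eBn, heq]
  · -- both aperiodic → product aperiodic
    rintro ⟨h1, h2⟩ v hv m n hmn
    have hv1 : Λ₁.IsVertex v.1 := by
      funext i
      have := congrFun hv (Fin.castAdd k₂ i)
      simpa [KGraph.prod_d Λ₁ Λ₂ v, Fin.append_left] using this
    have hv2 : Λ₂.IsVertex v.2 := by
      funext j
      have := congrFun hv (Fin.natAdd k₁ j)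
      simpa [KGraph.prod_d Λ₁ Λ₂ v, Fin.append_right] using this
    by_cases hc : (fun i => m (Fin.castAdd k₂ i)) = (fun i => n (Fin.castAdd k₂ i))
    · -- second components must differ
      have hc2 : (fun j => m (Fin.natAdd k₁ j)) ≠ (fun j => n (Fin.natAdd k₁ j)) := by
        intro h
        apply hmn
        rw [← KGraph.fin_append_restrict m, ← KGraph.fin_append_restrict n, hc, h]
      obtain ⟨lamB, hr₂, hle₂, hne₂⟩ := h2 v.2 hv2 _ _ hc2
      obtain ⟨lamA, hr₁, hd₁⟩ := Λ₁.exists_deg h₁s _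
        ((fun i => m (Fin.castAdd k₂ i)) ⊔ (fun i => n (Fin.castAdd k₂ i))) rfl v.1 hv1
      refine ⟨(lamA, lamB), ?_, ?_, ?_⟩
      · show (Λ₁.r lamA, Λ₂.r lamB) = v
        rw [hr₁, hr₂]
        rfl
      · intro i
        refine Fin.addCases (fun j => ?_) (fun j => ?_) i
        · have : (m ⊔ n) (Fin.castAdd k₂ j)
              = Λ₁.d lamA j := by
            rw [hd₁]; simp [sup_apply']
          rw [this]
          simp [KGraph.prod_d, Fin.append_left]
        · have h := hle₂ j
          simp only [sup_apply'] at h ⊢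
          simpa [KGraph.prod_d, Fin.append_right] using h
      · have hle : m ⊔ n ≤ (Λ₁.prod Λ₂).d (lamA, lamB) := by
          intro i
          refine Fin.addCases (fun j => ?_) (fun j => ?_) i
          · have : (m ⊔ n) (Fin.castAdd k₂ j) = Λ₁.d lamA j := by
              rw [hd₁]; simp [sup_apply']
            rw [this]
            simp [KGraph.prod_d, Fin.append_left]
          · have h := hle₂ j
            simp only [sup_apply'] at h ⊢
            simpa [KGraph.prod_d, Fin.append_right] using h
        obtain ⟨hmA, hAd, hnB, hBd⟩ := KGraph.mid_le hle
        rw [KGraph.prod_seg Λ₁ Λ₂ (lamA, lamB) m _ hmA hAd,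
            KGraph.prod_seg Λ₁ Λ₂ (lamA, lamB) n _ hnB hBd]
        intro heq
        apply hne₂
        have h2 := congrArg Prod.snd heq
        have eAm : (fun j => (m + (Λ₁.prod Λ₂).d (lamA, lamB) - (m ⊔ n)) (Fin.natAdd k₁ j))
            = (fun j => m (Fin.natAdd k₁ j)) + Λ₂.d lamB
              - ((fun j => m (Fin.natAdd k₁ j)) ⊔ (fun j => n (Fin.natAdd k₁ j))) := by
          funext j
          simp [Pi.add_apply, Pi.sub_apply, sup_apply', KGraph.prod_d, Fin.append_right]
        have eAn : (fun j => (n + (Λ₁.prod Λ₂).d (lamA, lamB) - (m ⊔ n)) (Fin.natAdd k₁ j))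
            = (fun j => n (Fin.natAdd k₁ j)) + Λ₂.d lamB
              - ((fun j => m (Fin.natAdd k₁ j)) ⊔ (fun j => n (Fin.natAdd k₁ j))) := by
          funext j
          simp [Pi.add_apply, Pi.sub_apply, sup_apply', KGraph.prod_d, Fin.append_right]
        rw [eAm, eAn] at h2
        exact h2
    · obtain ⟨lamA, hr₁, hle₁, hne₁⟩ := h1 v.1 hv1 _ _ hc
      obtain ⟨lamB, hr₂, hd₂⟩ := Λ₂.exists_deg h₂s _
        ((fun j => m (Fin.natAdd k₁ j)) ⊔ (fun j => n (Fin.natAdd k₁ j))) rfl v.2 hv2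
      refine ⟨(lamA, lamB), ?_, ?_, ?_⟩
      · show (Λ₁.r lamA, Λ₂.r lamB) = v
        rw [hr₁, hr₂]
        rfl
      · intro i
        refine Fin.addCases (fun j => ?_) (fun j => ?_) i
        · have h := hle₁ j
          simp only [sup_apply'] at h ⊢
          simpa [KGraph.prod_d, Fin.append_left] using h
        · have : (m ⊔ n) (Fin.natAdd k₁ j) = Λ₂.d lamB j := by
            rw [hd₂]; simp [sup_apply']
          rw [this]
          simp [KGraph.prod_d, Fin.append_right]
      · have hle : m ⊔ n ≤ (Λ₁.prod Λ₂).d (lamA, lamB) := by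
          intro i
          refine Fin.addCases (fun j => ?_) (fun j => ?_) i
          · have h := hle₁ j
            simp only [sup_apply'] at h ⊢
            simpa [KGraph.prod_d, Fin.append_left] using h
          · have : (m ⊔ n) (Fin.natAdd k₁ j) = Λ₂.d lamB j := by
              rw [hd₂]; simp [sup_apply']
            rw [this]
            simp [KGraph.prod_d, Fin.append_right]
        obtain ⟨hmA, hAd, hnB, hBd⟩ := KGraph.mid_le hle
        rw [KGraph.prod_seg Λ₁ Λ₂ (lamA, lamB) m _ hmA hAd,
            KGraph.prod_seg Λ₁ Λ₂ (lamA, lamB) n _ hnB hBd]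
        intro heq
        apply hne₁
        have h1' := congrArg Prod.fst heq
        have eAm : (fun i => (m + (Λ₁.prod Λ₂).d (lamA, lamB) - (m ⊔ n)) (Fin.castAdd k₂ i))
            = (fun i => m (Fin.castAdd k₂ i)) + Λ₁.d lamA
              - ((fun i => m (Fin.castAdd k₂ i)) ⊔ (fun i => n (Fin.castAdd k₂ i))) := by
          funext i
          simp [Pi.add_apply, Pi.sub_apply, sup_apply', KGraph.prod_d, Fin.append_left]
        have eAn : (fun i => (n + (Λ₁.prod Λ₂).d (lamA, lamB) - (m ⊔ n)) (Fin.castAdd k₂ i))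
            = (fun i => n (Fin.castAdd k₂ i)) + Λ₁.d lamA
              - ((fun i => m (Fin.castAdd k₂ i)) ⊔ (fun i => n (Fin.castAdd k₂ i))) := by
          funext i
          simp [Pi.add_apply, Pi.sub_apply, sup_apply', KGraph.prod_d, Fin.append_left]
        rw [eAm, eAn] at h1'
        exact h1'
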